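/- For matrices $S_t$ defined backwards by the Riccati recursion $S_t = Q_t + A_t^T S_{t+1} A_t - A_t^T S_{t+1} B_t (B_t^T S_{t+1} B_t + R_t)^{-1} B_t^T S_{t+1} A_t$ with terminal condition $S_{N+1} = Q_{N+1}$, where $Q_t \succeq 0$ and $R_t \succ 0$, each $S_t$ is positive semi-definite. -/
import Mathlib
open Matrix
theorem riccati_step {n m : ℕ}
    (A : Matrix (Fin n) (Fin n) ℝ) (B : Matrix (Fin n) (Fin m) ℝ)
    (Q : Matrix (Fin n) (Fin n) ℝ) (R : Matrix (Fin m) (Fin m) ℝ)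
    (S : Matrix (Fin n) (Fin n) ℝ)
    (hQ : Q.PosSemidef) (hR : R.PosDef) (hS : S.PosSemidef) :
    (Q + Aᵀ * S * A - Aᵀ * S * B * ((Bᵀ * S * B + R)⁻¹) * Bᵀ * S * A).PosSemidef := by
  have hSt : Sᵀ = S := by
    have := hS.isHermitian
    rwa [IsHermitian, conjTranspose_eq_transpose_of_trivial] at this
  have hRt : Rᵀ = R := by
    have := hR.isHermitian
    rwa [IsHermitian, conjTranspose_eq_transpose_of_trivial] at this
  set M : Matrix (Fin m) (Fin m) ℝ := Bᵀ * S * B + R with hMdef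
  have hBSB : (Bᵀ * S * B).PosSemidef := by
    have := hS.conjTranspose_mul_mul_same B
    rwa [conjTranspose_eq_transpose_of_trivial] at this
  have hM : M.PosDef := Matrix.PosDef.posSemidef_add hBSB hR
  have hMt : Mᵀ = M := by
    rw [hMdef, transpose_add, hRt, transpose_mul, transpose_mul, transpose_transpose, hSt,
      Matrix.mul_assoc]
  have hMdet : IsUnit M.det := isUnit_iff_ne_zero.mpr hM.det_pos.ne'
  have hMM : M * M⁻¹ = 1 := mul_nonsing_inv M hMdet
  have hMinvT : M⁻¹ᵀ = M⁻¹ := by rw [transpose_nonsing_inv, hMt]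
  set L : Matrix (Fin m) (Fin n) ℝ := Bᵀ * S * A with hLdef
  set K : Matrix (Fin m) (Fin n) ℝ := M⁻¹ * L with hKdef
  set T : Matrix (Fin n) (Fin n) ℝ := Aᵀ * S * B * M⁻¹ * Bᵀ * S * A with hTdef
  have hKt : Kᵀ = Aᵀ * S * B * M⁻¹ := by
    simp only [hKdef, hLdef, transpose_mul, transpose_transpose, hMinvT, hSt, Matrix.mul_assoc]
  have h1 : (A - B * K)ᵀ * S * (A - B * K)
      = Aᵀ * S * A - Aᵀ * S * (B * K) - ((B * K)ᵀ * S * A - (B * K)ᵀ * S * (B * K)) := by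
    rw [transpose_sub, Matrix.sub_mul, Matrix.sub_mul, Matrix.mul_sub, Matrix.mul_sub]
  have t1 : Aᵀ * S * (B * K) = T := by
    simp only [hTdef, hKdef, hLdef, Matrix.mul_assoc]
  have t2 : (B * K)ᵀ * S * A = T := by
    simp only [hTdef, hKdef, hLdef, transpose_mul, transpose_transpose, hMinvT, hSt,
      Matrix.mul_assoc]
  have t3b : (B * K)ᵀ * S * (B * K) = Kᵀ * (Bᵀ * S * B) * K := by
    simp only [transpose_mul, Matrix.mul_assoc]
  have t3a : Kᵀ * M * K = T := by
    rw [hKt, hKdef, Matrix.mul_assoc (Aᵀ * S * B * M⁻¹) M (M⁻¹ * L),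
      ← Matrix.mul_assoc M M⁻¹ L, hMM, Matrix.one_mul, hLdef, hTdef]
    simp only [Matrix.mul_assoc]
  have t3 : (B * K)ᵀ * S * (B * K) + Kᵀ * R * K = T := by
    rw [t3b, ← t3a, hMdef, Matrix.mul_add, Matrix.add_mul]
  have key : Q + Aᵀ * S * A - Aᵀ * S * B * M⁻¹ * Bᵀ * S * A
      = Q + (A - B * K)ᵀ * S * (A - B * K) + Kᵀ * R * K := by
    rw [h1, t1, t2, ← hTdef, ← t3]
    abel
  rw [key]
  have p1 : ((A - B * K)ᵀ * S * (A - B * K)).PosSemidef := by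
    have := hS.conjTranspose_mul_mul_same (A - B * K)
    rwa [conjTranspose_eq_transpose_of_trivial] at this
  have p2 : (Kᵀ * R * K).PosSemidef := by
    have := hR.posSemidef.conjTranspose_mul_mul_same K
    rwa [conjTranspose_eq_transpose_of_trivial] at this
  exact (hQ.add p1).add p2

/-- Riccati recursion preserves positive semi-definiteness. -/
theorem riccati_posSemidef {n m : ℕ} (N : ℕ)
    (A : ℕ → Matrix (Fin n) (Fin n) ℝ) (B : ℕ → Matrix (Fin n) (Fin m) ℝ)
    (Q : ℕ → Matrix (Fin n) (Fin n) ℝ) (R : ℕ → Matrix (Fin m) (Fin m) ℝ)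
    (hQ : ∀ t ≤ N + 1, (Q t).PosSemidef) (hR : ∀ t ≤ N, (R t).PosDef)
    (S : ℕ → Matrix (Fin n) (Fin n) ℝ)
    (hSN : S (N + 1) = Q (N + 1))
    (hS : ∀ t ≤ N, S t = Q t + (A t)ᵀ * S (t + 1) * A t -
      (A t)ᵀ * S (t + 1) * B t * ((B t)ᵀ * S (t + 1) * B t + R t)⁻¹ *
        (B t)ᵀ * S (t + 1) * A t) :
    ∀ t ≤ N + 1, (S t).PosSemidef := by
  have main : ∀ k t, t ≤ N + 1 → N + 1 - t = k → (S t).PosSemidef := by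
    intro k
    induction k with
    | zero =>
      intro t ht h0
      have : t = N + 1 := by omega
      rw [this, hSN]; exact hQ _ le_rfl
    | succ k ih =>
      intro t ht hk
      have htN : t ≤ N := by omega
      have hnext : (S (t + 1)).PosSemidef := ih (t + 1) (by omega) (by omega)
      rw [hS t htN]
      exact riccati_step (A t) (B t) (Q t) (R t) (S (t + 1))
        (hQ t (by omega)) (hR t htN) hnext
  intro t ht
  exact main (N + 1 - t) t ht rfl
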